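/- If a nonnegative locally Lipschitz function k : (0,T) → ℝ satisfies d/dt (1/k(t)) ≥ -4 almost everywhere (where k > 0), and there is a sequence t_j → T with k(t_j) → ∞, then k(t) ≥ 1/(4(T−t)) for all t ∈ (0,T). -/

import Mathlib

open Set Filter

open MeasureTheory intervalIntegral

lemma key_incr (g : ℝ → ℝ) (a b c : ℝ) (hab : a ≤ b) (hbc : b < c) (L : NNReal)
    (hg : LipschitzOnWith L g (Icc a c))
    (hae : ∀ᵐ t ∂(MeasureTheory.volume.restrict (Ioc a b)),
      DifferentiableAt ℝ g t ∧ -4 ≤ deriv g t) :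
    g a - g b ≤ 4 * (b - a) := by
  rcases eq_or_lt_of_le hab with rfl | hab
  · simp
  set μ := MeasureTheory.volume.restrict (Ioc a b) with hμ
  set h : ℕ → ℝ := fun n => (c - b) / (n + 1) with hh
  have hcb : 0 < c - b := by linarith
  have hpos : ∀ n, 0 < h n := fun n => div_pos hcb (by positivity)
  have hle : ∀ n, h n ≤ c - b := by
    intro n
    rw [hh]
    apply div_le_self hcb.le
    nlinarith [Nat.cast_nonneg (α := ℝ) n]
  have hlim : Tendsto h atTop (nhds 0) := by
    have h1 : Tendsto (fun n : ℕ => 1 / ((n : ℝ) + 1)) atTop (nhds 0) := tendsto_one_div_add_atTop_nhds_zero_nat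
    have h2 := h1.const_mul (c - b)
    simpa [hh, div_eq_mul_inv, mul_comm] using h2
  set F : ℕ → ℝ → ℝ := fun n t => (g (t + h n) - g t) / h n with hF
  have hgc : ContinuousOn g (Icc a c) := hg.continuousOn
  have hint : ∀ x y, a ≤ x → x ≤ y → y ≤ c → IntervalIntegrable g MeasureTheory.volume x y := by
    intro x y hx hxy hyc
    apply (hgc.mono ?_).intervalIntegrable
    rw [uIcc_of_le hxy]
    exact Icc_subset_Icc hx hyc
  have hshift : ∀ n, ContinuousOn (fun t => g (t + h n)) (Icc a b) := by
    intro n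
    apply hgc.comp (continuous_add_right (h n)).continuousOn
    intro t ht
    simp only [mem_Icc] at ht ⊢
    exact ⟨by linarith [ht.1, (hpos n).le], by linarith [ht.2, hle n]⟩
  have hFc : ∀ n, ContinuousOn (F n) (Icc a b) := by
    intro n
    exact ((hshift n).sub (hgc.mono (Icc_subset_Icc le_rfl (by linarith)))).div_const _
  have hbound : ∀ n, ∀ᵐ t ∂μ, ‖F n t‖ ≤ (L : ℝ) := by
    intro n
    filter_upwards [ae_restrict_mem measurableSet_Ioc] with t ht
    have h1 : t ∈ Icc a c := ⟨ht.1.le, by linarith [ht.2]⟩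
    have h2 : t + h n ∈ Icc a c := ⟨by linarith [ht.1.le, (hpos n).le], by linarith [ht.2, hle n]⟩
    have hd := hg.dist_le_mul _ h2 _ h1
    rw [Real.dist_eq, Real.dist_eq] at hd
    have habs : |g (t + h n) - g t| ≤ (L : ℝ) * h n := by
      simpa [abs_of_pos (hpos n)] using hd
    simp only [hF, Real.norm_eq_abs, abs_div, abs_of_pos (hpos n)]
    rw [div_le_iff₀ (hpos n)]
    exact habs
  have hconv : ∀ᵐ t ∂μ, Tendsto (fun n => F n t) atTop (nhds (deriv g t)) := by
    filter_upwards [hae] with t ht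
    have hd : HasDerivAt g (deriv g t) t := ht.1.hasDerivAt
    rw [hasDerivAt_iff_tendsto_slope] at hd
    have hseq : Tendsto (fun n => t + h n) atTop (nhdsWithin t {t}ᶜ) := by
      apply tendsto_nhdsWithin_of_tendsto_nhds_of_eventually_within
      · simpa using (tendsto_const_nhds (x := t)).add hlim
      · filter_upwards with n
        simp [ne_of_gt (hpos n)]
    have h3 := hd.comp hseq
    convert h3 using 2 with n
    simp [hF, slope_def_field]
  have hmeas : ∀ n, AEStronglyMeasurable (F n) μ :=
    fun n => ((hFc n).mono Ioc_subset_Icc_self).aestronglyMeasurable measurableSet_Ioc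
  have hLint : MeasureTheory.Integrable (fun _ : ℝ => (L : ℝ)) μ :=
    MeasureTheory.integrable_const _
  have hdct : Tendsto (fun n => ∫ t, F n t ∂μ) atTop (nhds (∫ t, deriv g t ∂μ)) :=
    MeasureTheory.tendsto_integral_of_dominated_convergence _ hmeas hLint hbound hconv
  -- compute the integrals of F n
  have hcalc : ∀ n, ∫ t, F n t ∂μ
      = (∫ t in b..(b + h n), g t) / h n - (∫ t in a..(a + h n), g t) / h n := by
    intro n
    have e0 : ∫ t, F n t ∂μ = ∫ t in a..b, F n t := by
      rw [intervalIntegral.integral_of_le hab.le]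
    rw [e0]
    have i1 : IntervalIntegrable (fun t => g (t + h n)) MeasureTheory.volume a b := by
      apply ContinuousOn.intervalIntegrable
      rw [uIcc_of_le hab.le]; exact hshift n
    have i2 : IntervalIntegrable g MeasureTheory.volume a b := hint a b le_rfl hab.le (by linarith)
    have e1 : ∫ t in a..b, F n t
        = ((∫ t in a..b, g (t + h n)) - ∫ t in a..b, g t) / h n := by
      rw [← intervalIntegral.integral_sub i1 i2, ← intervalIntegral.integral_div]
    have e2 : (∫ t in a..b, g (t + h n)) = ∫ t in (a + h n)..(b + h n), g t :=
      intervalIntegral.integral_comp_add_right g (h n)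
    have A1 : (∫ t in a..(a + h n), g t) + ∫ t in (a + h n)..(b + h n), g t
        = ∫ t in a..(b + h n), g t := by
      apply intervalIntegral.integral_add_adjacent_intervals
      · exact hint a (a + h n) le_rfl (by linarith [(hpos n).le]) (by linarith [hle n])
      · exact hint (a + h n) (b + h n) (by linarith [(hpos n).le]) (by linarith) (by linarith [hle n])
    have A2 : (∫ t in a..b, g t) + ∫ t in b..(b + h n), g t = ∫ t in a..(b + h n), g t := by
      apply intervalIntegral.integral_add_adjacent_intervals
      · exact i2
      · exact hint b (b + h n) hab.le (by linarith [(hpos n).le]) (by linarith [hle n])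
    rw [e1, e2, div_sub_div_same]
    congr 1
    linarith
  -- the endpoint averages converge
  have hend : ∀ x, a ≤ x → x ≤ b →
      Tendsto (fun n => (∫ t in x..(x + h n), g t) / h n) atTop (nhds (g x)) := by
    intro x hax hxb
    have hxc : x ∈ Icc a c := ⟨hax, by linarith⟩
    rw [← tendsto_sub_nhds_zero_iff]
    apply squeeze_zero_norm (a := fun n => (L : ℝ) * h n)
    · intro n
      have hb2 : ∀ t ∈ Set.uIoc x (x + h n), ‖g t - g x‖ ≤ (L : ℝ) * h n := by
        intro t ht
        rw [Set.uIoc_of_le (by linarith [(hpos n).le])] at ht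
        have h1 : t ∈ Icc a c := ⟨by linarith [ht.1], by linarith [ht.2, hle n, hxb]⟩
        have hd := hg.dist_le_mul _ h1 _ hxc
        rw [Real.dist_eq, Real.dist_eq] at hd
        refine hd.trans ?_
        have : |t - x| ≤ h n := by
          rw [abs_of_nonneg (by linarith [ht.1])]
          linarith [ht.2]
        nlinarith [L.coe_nonneg]
      have hnorm := intervalIntegral.norm_integral_le_of_norm_le_const hb2
      have ig : IntervalIntegrable g MeasureTheory.volume x (x + h n) :=
        hint x (x + h n) hax (by linarith [(hpos n).le]) (by linarith [hle n, hxb])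
      have ic : IntervalIntegrable (fun _ : ℝ => g x) MeasureTheory.volume x (x + h n) :=
        intervalIntegrable_const
      have esub : (∫ t in x..(x + h n), (g t - g x))
          = (∫ t in x..(x + h n), g t) - (h n) * g x := by
        rw [intervalIntegral.integral_sub ig ic, intervalIntegral.integral_const]
        simp only [smul_eq_mul, add_sub_cancel_left]
        try ring
      have : (∫ t in x..(x + h n), g t) / h n - g x
          = (∫ t in x..(x + h n), (g t - g x)) / h n := by
        rw [esub]
        rw [sub_div, mul_div_cancel_left₀ _ (hpos n).ne']
      rw [this, Real.norm_eq_abs, abs_div, abs_of_pos (hpos n), div_le_iff₀ (hpos n)]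
      calc |∫ t in x..(x + h n), (g t - g x)| ≤ (L : ℝ) * h n * |x + h n - x| := hnorm
        _ = (L : ℝ) * h n * h n := by rw [add_sub_cancel_left, abs_of_pos (hpos n)]
    · simpa using hlim.const_mul (L : ℝ)
  have hlim2 : Tendsto (fun n => ∫ t, F n t ∂μ) atTop (nhds (g b - g a)) := by
    have := (hend b hab.le le_rfl).sub (hend a le_rfl hab.le)
    apply this.congr
    intro n
    rw [hcalc n]
  -- identify the limit
  have hkey : ∫ t, deriv g t ∂μ = g b - g a := tendsto_nhds_unique hdct hlim2
  -- lower bound the integral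
  have hder_int : MeasureTheory.Integrable (deriv g) μ := by
    apply hLint.mono' ((measurable_deriv g).aestronglyMeasurable)
    have hall : ∀ᵐ t ∂μ, ∀ n, ‖F n t‖ ≤ (L : ℝ) := (MeasureTheory.ae_all_iff).2 hbound
    filter_upwards [hall, hconv] with t hbd hcv
    have := le_of_tendsto hcv.norm (Eventually.of_forall hbd)
    simpa using this
  have hmono : ∫ t, (-4 : ℝ) ∂μ ≤ ∫ t, deriv g t ∂μ := by
    apply MeasureTheory.integral_mono_ae (MeasureTheory.integrable_const _) hder_int
    filter_upwards [hae] with t ht using ht.2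
  have hconst : ∫ _ : ℝ, (-4 : ℝ) ∂μ = -4 * (b - a) := by
    rw [MeasureTheory.integral_const]
    simp [hμ, Real.volume_Ioc, ENNReal.toReal_ofReal (by linarith : (0:ℝ) ≤ b - a)]
    rw [max_eq_left (by linarith)]; ring
  rw [hconst, hkey] at hmono
  linarith

lemma glocal (T : ℝ) (k : ℝ → ℝ)
    (hpos : ∀ t ∈ Ioo (0:ℝ) T, 0 < k t)
    (hlip : LocallyLipschitzOn (Ioo (0:ℝ) T) k)
    {x : ℝ} (hx : x ∈ Ioo (0:ℝ) T) :
    ∃ δ > 0, ∃ L : NNReal, Icc (x - δ) (x + δ) ⊆ Ioo (0:ℝ) T ∧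
      LipschitzOnWith L (fun s => (k s)⁻¹) (Icc (x - δ) (x + δ)) := by
  obtain ⟨K, t, ht, hK⟩ := hlip hx
  rw [nhdsWithin_eq_nhds.2 (isOpen_Ioo.mem_nhds hx)] at ht
  have hcont : ContinuousAt k x := hK.continuousOn.continuousAt ht
  set m := k x / 2 with hm
  have hm0 : 0 < m := half_pos (hpos x hx)
  have hU : t ∩ k ⁻¹' (Ioi m) ∩ Ioo (0:ℝ) T ∈ nhds x := by
    refine Filter.inter_mem (Filter.inter_mem ht ?_) (isOpen_Ioo.mem_nhds hx)
    exact hcont.preimage_mem_nhds (Ioi_mem_nhds (by linarith [hpos x hx]))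
  obtain ⟨δ, hδ, hsub⟩ := (nhds_basis_Icc_pos x).mem_iff.1 hU
  set M : NNReal := K * (Real.toNNReal m⁻¹) ^ 2 with hM
  refine ⟨δ, hδ, M, fun s hs => (hsub hs).2, ?_⟩
  apply LipschitzOnWith.of_dist_le_mul
  intro y hy z hz
  have hym := (hsub hy).1.2
  have hzm := (hsub hz).1.2
  simp only [mem_preimage, mem_Ioi] at hym hzm
  have hy0 : 0 < k y := lt_trans hm0 hym
  have hz0 : 0 < k z := lt_trans hm0 hzm
  have e : (k y)⁻¹ - (k z)⁻¹ = (k z - k y) / (k y * k z) := by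
    field_simp
  rw [Real.dist_eq, e, abs_div, abs_of_pos (mul_pos hy0 hz0)]
  have h1 : |k z - k y| ≤ (K : ℝ) * dist y z := by
    have := hK.dist_le_mul _ (hsub hz).1.1 _ (hsub hy).1.1
    rw [Real.dist_eq] at this
    rw [dist_comm]
    exact this
  have h2 : |k z - k y| / (k y * k z) ≤ ((K : ℝ) * dist y z) / (m * m) := by
    apply div_le_div₀ (by positivity) h1 (by positivity)
    nlinarith
  refine h2.trans (le_of_eq ?_)
  have hMc : (M : ℝ) = (K : ℝ) * (m⁻¹ * m⁻¹) := by
    simp [hM, sq, Real.coe_toNNReal _ (inv_nonneg.2 hm0.le)]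
    try ring
  rw [hMc]
  field_simp
  try ring

theorem stmt_1 (T : ℝ) (hT : 0 < T) (k : ℝ → ℝ)
    (hpos : ∀ t ∈ Ioo (0:ℝ) T, 0 < k t)
    (hlip : LocallyLipschitzOn (Ioo (0:ℝ) T) k)
    (hder : ∀ t ∈ Ioo (0:ℝ) T,
      DifferentiableAt ℝ (fun s => (k s)⁻¹) t → -4 ≤ deriv (fun s => (k s)⁻¹) t)
    (hdiff_ae : ∀ᵐ t ∂(MeasureTheory.volume.restrict (Ioo (0:ℝ) T)),
      DifferentiableAt ℝ (fun s => (k s)⁻¹) t)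
    (tj : ℕ → ℝ) (htj : ∀ j, tj j ∈ Ioo (0:ℝ) T)
    (htjT : Tendsto tj atTop (nhds T))
    (hblow : Tendsto (fun j => k (tj j)) atTop atTop) :
    ∀ t ∈ Ioo (0:ℝ) T, 1 / (4 * (T - t)) ≤ k t := by
  set g : ℝ → ℝ := fun s => (k s)⁻¹ with hg
  have hbig : ∀ᵐ s ∂(MeasureTheory.volume.restrict (Ioo (0:ℝ) T)),
      DifferentiableAt ℝ g s ∧ -4 ≤ deriv g s := by
    filter_upwards [hdiff_ae, MeasureTheory.ae_restrict_mem measurableSet_Ioo] with s h1 h2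
    exact ⟨h1, hder s h2 h1⟩
  have gcont : ContinuousOn g (Ioo (0:ℝ) T) :=
    (hlip.continuousOn).inv₀ fun s hs => (hpos s hs).ne'
  -- chaining
  have chain : ∀ t ∈ Ioo (0:ℝ) T, ∀ b ∈ Ioo (0:ℝ) T, t ≤ b → g t - g b ≤ 4 * (b - t) := by
    intro t ht b hb htb
    have hicc : Icc t b ⊆ Ioo (0:ℝ) T := fun s hs => ⟨lt_of_lt_of_le ht.1 hs.1,
      lt_of_le_of_lt hs.2 hb.2⟩
    set S := {s : ℝ | g t - g s ≤ 4 * (s - t)} with hS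
    suffices h : Icc t b ⊆ S by
      have := h ⟨htb, le_rfl⟩
      simpa [hS] using this
    apply IsClosed.Icc_subset_of_forall_exists_gt
    · set φ : ℝ → ℝ := fun s => g t - g s - 4 * (s - t) with hφ
      have φc : ContinuousOn φ (Icc t b) := by
        apply ContinuousOn.sub
        · exact (continuousOn_const.sub (gcont.mono hicc))
        · exact (continuous_const.mul (continuous_id.sub continuous_const)).continuousOn
      have heq : S ∩ Icc t b = Icc t b ∩ φ ⁻¹' (Iic 0) := by
        ext s
        simp only [hS, hφ, mem_inter_iff, mem_setOf_eq, mem_preimage, mem_Iic]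
        constructor
        · rintro ⟨h1, h2⟩; exact ⟨h2, by linarith⟩
        · rintro ⟨h1, h2⟩; exact ⟨by linarith, h1⟩
      rw [heq]
      exact φc.preimage_isClosed_of_isClosed isClosed_Icc isClosed_Iic
    · simp [hS]
    · intro x hx y hy
      have hxI : x ∈ Ioo (0:ℝ) T := hicc ⟨hx.2.1, hx.2.2.le⟩
      obtain ⟨δ, hδ, L, hsub, hLip⟩ := glocal T k hpos hlip hxI
      set ε := min (y - x) (min (δ / 2) (b - x)) with hε
      have hε0 : 0 < ε := by
        apply lt_min (by simpa using hy)
        exact lt_min (by linarith) (by linarith [hx.2.2])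
      set z := x + ε with hz
      have hzb : z ≤ b := by
        have : ε ≤ b - x := (min_le_right _ _).trans (min_le_right _ _)
        simp [hz]; linarith
      have hzδ : z < x + δ := by
        have : ε ≤ δ / 2 := (min_le_right _ _).trans (min_le_left _ _)
        simp [hz]; linarith
      have hIsub : Icc x (x + δ) ⊆ Icc (x - δ) (x + δ) :=
        Icc_subset_Icc (by linarith) le_rfl
      have hae' : ∀ᵐ s ∂(MeasureTheory.volume.restrict (Ioc x z)),
          DifferentiableAt ℝ g s ∧ -4 ≤ deriv g s := by
        apply MeasureTheory.ae_restrict_of_ae_restrict_of_subset ?_ hbig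
        intro s hs
        exact ⟨lt_trans hxI.1 hs.1, lt_of_le_of_lt (hs.2.trans hzb) hb.2⟩
      have hkey := key_incr g x z (x + δ) (by simp [hz]; linarith) hzδ L
        (hLip.mono hIsub) hae'
      refine ⟨z, ?_, lt_add_of_pos_right x hε0, ?_⟩
      · have hxS : g t - g x ≤ 4 * (x - t) := hx.1
        simp only [hS, mem_setOf_eq]
        have : z - x = ε := by simp [hz]
        linarith [hkey]
      · have : ε ≤ y - x := min_le_left _ _
        simp [hz]; linarith
  -- pass to the limit along tj
  intro t ht
  have hev : ∀ᶠ j in atTop, t < tj j := htjT.eventually (eventually_gt_nhds ht.2)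
  have hineq : ∀ᶠ j in atTop, g t ≤ g (tj j) + 4 * (tj j - t) := by
    filter_upwards [hev] with j hj
    have := chain t ht (tj j) (htj j) hj.le
    linarith
  have hlim0 : Tendsto (fun j => g (tj j)) atTop (nhds 0) :=
    tendsto_inv_atTop_zero.comp hblow
  have hlim : Tendsto (fun j => g (tj j) + 4 * (tj j - t)) atTop (nhds (0 + 4 * (T - t))) :=
    hlim0.add (((htjT.sub_const t)).const_mul 4)
  have hgt : g t ≤ 4 * (T - t) := by
    have := ge_of_tendsto hlim hineq
    linarith
  have hk := hpos t ht
  have hg0 : 0 < g t := inv_pos.2 hk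
  have h4 : 0 < 4 * (T - t) := lt_of_lt_of_le hg0 hgt
  rw [div_le_iff₀ h4]
  calc (1:ℝ) = k t * (k t)⁻¹ := (mul_inv_cancel₀ hk.ne').symm
    _ ≤ k t * (4 * (T - t)) := mul_le_mul_of_nonneg_left hgt hk.le
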